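/- For N sufficiently large (so that N^2 · 2^{−K} ≤ 1/2) and any integer 1 ≤ l ≤ N−K−1, the number of configurations σ ∈ {−1,+1}^N with N·Q(σ) = l is at most N·2^{N−(K+l)}. -/

import Mathlib

open Finset

/-- Periodic extension of a configuration on `Fin N` to `ℕ` (`σ_{i+N} = σ_i`);
`true` plays the role of `+1` and `false` of `-1`. -/
def ext {N : ℕ} (σ : Fin N → Bool) : ℕ → Bool := fun i =>
  if h : N = 0 then false
  else σ ⟨i % N, Nat.mod_lt _ (Nat.pos_of_ne_zero h)⟩

/-- Number of sites `i ∈ {0,…,N−1}` such that the (periodic) configurations `σ`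
and `τ` agree on the whole window `i, i+1, …, i+K`. -/
def matchCount (N K : ℕ) (σ τ : ℕ → Bool) : ℕ :=
  ((Finset.range N).filter fun i => ∀ j ≤ K, σ (i + j) = τ (i + j)).card

/-- Epistatic overlap `Q(σ,τ)` of two periodic configurations. -/
noncomputable def Qov (N K : ℕ) (σ τ : ℕ → Bool) : ℝ := (matchCount N K σ τ : ℝ) / N

/-- Epistatic overlap `Q(σ)` of a configuration with the all-ones configuration. -/
noncomputable def Qone (N K : ℕ) (σ : ℕ → Bool) : ℝ := Qov N K σ (fun _ => true)


/-- If `N²·2^{−K} ≤ 1/2` and `1 ≤ l ≤ N−K−1`, then the number of configurations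
`σ ∈ {−1,+1}^N` with `N·Q(σ) = l` is at most `N·2^{N−(K+l)}`. -/
lemma ext_congr_mod {N : ℕ} (σ : Fin N → Bool) {i j : ℕ} (h : i % N = j % N) :
    ext σ i = ext σ j := by
  unfold _root_.ext
  split
  · rfl
  · simp only [h]

lemma ext_mod {N : ℕ} (σ : Fin N → Bool) (i : ℕ) : ext σ (i % N) = ext σ i :=
  ext_congr_mod σ (by simp [Nat.mod_mod])

lemma ext_add_N {N : ℕ} (σ : Fin N → Bool) (i : ℕ) : ext σ (i + N) = ext σ i :=
  ext_congr_mod σ (by simp)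

lemma ext_lt {N : ℕ} (σ : Fin N → Bool) {i : ℕ} (h : i < N) : ext σ i = σ ⟨i, h⟩ := by
  unfold _root_.ext
  split
  · omega
  · congr 1
    exact Fin.ext (Nat.mod_eq_of_lt h)

/-- window predicate -/
def Wp (K : ℕ) (e : ℕ → Bool) (i : ℕ) : Prop := ∀ j ≤ K, e (i + j) = true

instance (K : ℕ) (e : ℕ → Bool) (i : ℕ) : Decidable (Wp K e i) := by
  unfold Wp; infer_instance

lemma Wp_congr_mod {N K : ℕ} (σ : Fin N → Bool) {a b : ℕ} (h : a % N = b % N) :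
    Wp K (ext σ) a ↔ Wp K (ext σ) b := by
  unfold Wp
  refine forall₂_congr fun j hj => ?_
  rw [show ext σ (a + j) = ext σ (b + j) from
    ext_congr_mod σ (by rw [Nat.add_mod, h, ← Nat.add_mod])]

lemma matchCount_eq_card {N K : ℕ} (σ : Fin N → Bool) :
    matchCount N K (ext σ) (fun _ => true) =
      ((Finset.range N).filter fun i => Wp K (ext σ) i).card := by
  unfold matchCount Wp
  congr 1

example : True := trivial

def rotC {N : ℕ} (σ : Fin N → Bool) (c : ℕ) : Fin N → Bool := fun k => ext σ (↑k + c)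

lemma ext_rotC {N : ℕ} (σ : Fin N → Bool) (c x : ℕ) :
    ext (rotC σ c) x = ext σ (x + c) := by
  rcases Nat.eq_zero_or_pos N with h | h
  · subst h
    unfold _root_.ext
    simp
  · calc ext (rotC σ c) x = ext (rotC σ c) (x % N) := (ext_mod _ x).symm
      _ = rotC σ c ⟨x % N, Nat.mod_lt x h⟩ := ext_lt _ (Nat.mod_lt x h)
      _ = ext σ ((x % N) + c) := rfl
      _ = ext σ (x + c) :=
          ext_congr_mod σ (by rw [Nat.add_mod, Nat.mod_mod, ← Nat.add_mod])


lemma mod_shift_key {N : ℕ} (hN : 0 < N) (c x : ℕ) (hx : x < N) :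
    (x + (N - c % N) + c) % N = x := by
  obtain ⟨q, hq⟩ : ∃ q, q = N * (c / N) := ⟨_, rfl⟩
  have hd : q + c % N = c := by rw [hq]; exact Nat.div_add_mod c N
  have hlt : c % N < N := Nat.mod_lt _ hN
  have e1 : x + (N - c % N) + c = x + q + N := by omega
  rw [e1, Nat.add_mod_right, hq, Nat.add_mul_mod_self_left, Nat.mod_eq_of_lt hx]

lemma matchCount_rotC {N K : ℕ} (hN : 0 < N) (σ : Fin N → Bool) (c : ℕ) :
    matchCount N K (ext (rotC σ c)) (fun _ => true) =
      matchCount N K (ext σ) (fun _ => true) := by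
  rw [matchCount_eq_card, matchCount_eq_card]
  have hW : ∀ i, Wp K (ext (rotC σ c)) i ↔ Wp K (ext σ) (i + c) := by
    intro i
    unfold Wp
    refine forall₂_congr fun j hj => ?_
    rw [ext_rotC]
    congr! 2
    omega
  apply Finset.card_nbij' (i := fun i => (i + c) % N) (j := fun j => (j + (N - c % N)) % N)
  · intro a ha
    simp only [Finset.mem_coe, mem_filter, mem_range] at *
    refine ⟨Nat.mod_lt _ hN, ?_⟩
    rw [Wp_congr_mod σ (Nat.mod_mod _ _)]
    exact (hW a).mp ha.2
  · intro b hb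
    simp only [Finset.mem_coe, mem_filter, mem_range] at *
    refine ⟨Nat.mod_lt _ hN, ?_⟩
    rw [hW, Wp_congr_mod σ (show ((b + (N - c % N)) % N + c) % N = b % N by
      rw [Nat.mod_add_mod, mod_shift_key hN c b hb.1, Nat.mod_eq_of_lt hb.1])]
    exact hb.2
  · intro a ha
    simp only [Finset.mem_coe, mem_filter, mem_range] at ha
    have : ((a + c) % N + (N - c % N)) % N = ((a + (N - c % N)) + c) % N := by
      rw [Nat.mod_add_mod]
      congr 1
      omega
    beta_reduce; rw [this, mod_shift_key hN c a ha.1]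
  · intro b hb
    simp only [Finset.mem_coe, mem_filter, mem_range] at hb
    beta_reduce; rw [Nat.mod_add_mod, mod_shift_key hN c b hb.1]

def F0 (N K l : ℕ) : Finset (Fin N → Bool) :=
  univ.filter (fun τ => matchCount N K (ext τ) (fun _ => true) = l ∧
    Wp K (ext τ) 0 ∧ ext τ (N - 1) = false)

lemma exists_runstart {N K : ℕ} (σ : Fin N → Bool) (hN : 0 < N)
    (ha : ∃ a < N, Wp K (ext σ) a) (hb : ∃ b < N, ¬ Wp K (ext σ) b) :
    ∃ i < N, Wp K (ext σ) i ∧ ¬ Wp K (ext σ) (i + (N - 1)) := by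
  obtain ⟨a, haN, hWa⟩ := ha
  obtain ⟨b, hbN, hWb⟩ := hb
  have hex : ∃ d, Wp K (ext σ) (b + (d + 1)) := by
    refine ⟨a + N - b - 1, ?_⟩
    have h1 : b + (a + N - b - 1 + 1) = a + N := by omega
    rw [h1, Wp_congr_mod σ (show (a + N) % N = a % N by simp)]
    exact hWa
  classical
  set d₀ := Nat.find hex with hd₀
  have hW1 : Wp K (ext σ) (b + (d₀ + 1)) := Nat.find_spec hex
  have hW0 : ¬ Wp K (ext σ) (b + d₀) := by
    rcases Nat.eq_zero_or_pos d₀ with h | h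
    · rw [h]; simpa using hWb
    · have := Nat.find_min hex (show d₀ - 1 < d₀ by omega)
      intro hc
      exact this (by rwa [show b + (d₀ - 1 + 1) = b + d₀ by omega])
  refine ⟨(b + (d₀ + 1)) % N, Nat.mod_lt _ hN, ?_, ?_⟩
  · rwa [Wp_congr_mod σ (Nat.mod_mod _ _)]
  · intro hc
    apply hW0
    have hmod : ((b + (d₀ + 1)) % N + (N - 1)) % N = (b + d₀) % N := by
      rw [Nat.mod_add_mod]
      have : b + (d₀ + 1) + (N - 1) = (b + d₀) + N := by omega
      rw [this, Nat.add_mod_right]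
    exact (Wp_congr_mod σ hmod).mp hc

open Classical in
noncomputable def runStart (N K : ℕ) (σ : Fin N → Bool) : ℕ :=
  if h : (∃ i < N, Wp K (ext σ) i ∧ ¬ Wp K (ext σ) (i + (N - 1))) then Nat.find h else 0

lemma part1 {N K l : ℕ} (hN : 0 < N) (hl1 : 1 ≤ l) (hlN : l < N) :
    (univ.filter fun σ : Fin N → Bool =>
        matchCount N K (ext σ) (fun _ => true) = l).card ≤ N * (F0 N K l).card := by
  classical
  have htarget : ((univ : Finset (Fin N)) ×ˢ F0 N K l).card = N * (F0 N K l).card := by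
    rw [Finset.card_product, card_univ, Fintype.card_fin]
  rw [← htarget]
  apply Finset.card_le_card_of_injOn
    (fun σ => ((⟨runStart N K σ % N, Nat.mod_lt _ hN⟩ : Fin N), rotC σ (runStart N K σ)))
  · -- maps to
    intro σ hσ
    simp only [Finset.mem_coe, mem_filter, mem_univ, true_and] at hσ
    have hex : ∃ i < N, Wp K (ext σ) i ∧ ¬ Wp K (ext σ) (i + (N - 1)) := by
      apply exists_runstart σ hN
      · have hpos : 0 < ((Finset.range N).filter fun i => Wp K (ext σ) i).card := by
          rw [← matchCount_eq_card, hσ]; omega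
        obtain ⟨a, haa⟩ := Finset.card_pos.mp hpos
        simp only [mem_filter, mem_range] at haa
        exact ⟨a, haa.1, haa.2⟩
      · by_contra hall
        push_neg at hall
        have heq : ((Finset.range N).filter fun i => Wp K (ext σ) i) = Finset.range N :=
          Finset.filter_true_of_mem (fun i hi => hall i (mem_range.mp hi))
        have hmc := matchCount_eq_card (K := K) σ
        rw [heq, Finset.card_range] at hmc
        omega
    have hrs : runStart N K σ = Nat.find hex := by
      unfold runStart
      rw [dif_pos hex]
    obtain ⟨hi₀N, hWi₀, hnW⟩ := Nat.find_spec hex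
    set c := runStart N K σ with hc
    have hcfind : c = Nat.find hex := hrs
    have hcN : c < N := by rw [hcfind]; exact hi₀N
    have hWc : Wp K (ext σ) c := by rw [hcfind]; exact hWi₀
    have hnWc : ¬ Wp K (ext σ) (c + (N - 1)) := by rw [hcfind]; exact hnW
    simp only [Finset.mem_coe, Finset.mem_product, mem_univ, true_and]
    unfold F0
    simp only [mem_filter, mem_univ, true_and]
    refine ⟨matchCount_rotC hN σ c ▸ hσ, ?_, ?_⟩
    · intro j hj
      rw [ext_rotC]
      rw [show 0 + j + c = c + j by omega]
      exact hWc j hj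
    · rw [ext_rotC]
      -- show ext σ (N - 1 + c) = false
      by_contra hne
      apply hnWc
      intro j hj
      rcases Nat.eq_zero_or_pos j with h0 | hpos
      · subst h0
        simp only [Nat.add_zero]
        rw [show c + (N - 1) = N - 1 + c by omega]
        simpa using hne
      · have : ext σ (c + (N - 1) + j) = ext σ (c + (j - 1)) := by
          apply ext_congr_mod
          have : c + (N - 1) + j = c + (j - 1) + N := by omega
          rw [this, Nat.add_mod_right]
        rw [this]
        exact hWc (j - 1) (by omega)
  · -- injectivity
    intro σ₁ h₁ σ₂ h₂ heq
    simp only [Prod.mk.injEq, Fin.mk.injEq] at heq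
    obtain ⟨hceq, hreq⟩ := heq
    -- we don't even need hceq beyond using each rotation
    funext k
    have key : ∀ σ : Fin N → Bool, ∀ c : ℕ,
        σ k = rotC σ c ⟨(↑k + (N - c % N)) % N, Nat.mod_lt _ hN⟩ := by
      intro σ c
      show σ k = ext σ ((↑k + (N - c % N)) % N + c)
      have h1 : ((↑k + (N - c % N)) % N + c) % N = ↑k % N := by
        rw [Nat.mod_add_mod, mod_shift_key hN c ↑k k.isLt, Nat.mod_eq_of_lt k.isLt]
      have h2 : ext σ ((↑k + (N - c % N)) % N + c) = ext σ ↑k := ext_congr_mod σ h1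
      rw [h2, ext_lt σ k.isLt]
    set c₁ := runStart N K σ₁ with hc₁
    set c₂ := runStart N K σ₂ with hc₂
    have hidx : (↑k + (N - c₁ % N)) % N = (↑k + (N - c₂ % N)) % N := by rw [hceq]
    have e1 := key σ₁ c₁
    have e2 := key σ₂ c₂
    rw [e1, hreq, e2]
    congr 1
    exact Fin.ext hidx

def Sset (N K : ℕ) (σ : Fin N → Bool) : Finset ℕ :=
  (range (N - (K+1))).filter (fun i => Wp K (ext σ) i)

lemma mem_F0 {N K l : ℕ} {σ : Fin N → Bool} (h : σ ∈ F0 N K l) :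
    matchCount N K (ext σ) (fun _ => true) = l ∧ Wp K (ext σ) 0 ∧ ext σ (N - 1) = false := by
  unfold F0 at h
  simpa using h

lemma Sset_subset {N K : ℕ} (σ : Fin N → Bool) : Sset N K σ ⊆ range (N - (K+1)) :=
  Finset.filter_subset _ _

lemma Sset_true {N K : ℕ} {σ : Fin N → Bool} {s : ℕ} (hs : s ∈ Sset N K σ)
    {j : ℕ} (hj : j ≤ K) : ext σ (s + j) = true := by
  unfold Sset at hs
  exact (Finset.mem_filter.mp hs).2 j hj

lemma Sset_card {N K l : ℕ} {σ : Fin N → Bool} (h : σ ∈ F0 N K l) :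
    (Sset N K σ).card = l := by
  obtain ⟨hmc, _, hlast⟩ := mem_F0 h
  rw [matchCount_eq_card] at hmc
  rw [← hmc]
  unfold Sset
  congr 1
  apply Finset.ext
  intro i
  simp only [mem_filter, mem_range]
  constructor
  · rintro ⟨hi, hW⟩
    exact ⟨by omega, hW⟩
  · rintro ⟨hi, hW⟩
    refine ⟨?_, hW⟩
    by_contra hge
    push_neg at hge
    have hj : N - 1 - i ≤ K := by omega
    have := hW (N - 1 - i) hj
    rw [show i + (N - 1 - i) = N - 1 by omega] at this
    rw [this] at hlast
    simp at hlast

lemma Sset_zero_mem {N K l : ℕ} {σ : Fin N → Bool} (h : σ ∈ F0 N K l)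
    (hNK2 : K + 2 ≤ N) : 0 ∈ Sset N K σ := by
  obtain ⟨_, hW0, _⟩ := mem_F0 h
  unfold Sset
  simp only [mem_filter, mem_range]
  exact ⟨by omega, hW0⟩

lemma Sset_false {N K l : ℕ} {σ : Fin N → Bool} (h : σ ∈ F0 N K l)
    {e : ℕ} (he : e ∈ Sset N K σ) (hne : e + 1 ∉ Sset N K σ) :
    ext σ (e + K + 1) = false := by
  obtain ⟨_, _, hlast⟩ := mem_F0 h
  have heN : e < N - (K+1) := by
    have := Sset_subset σ he
    simpa using this
  rcases Nat.lt_or_ge (e+1) (N - (K+1)) with hlt | hge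
  · -- e+1 eligible; not in Sset means some position false
    have : ¬ Wp K (ext σ) (e+1) := by
      intro hW
      apply hne
      unfold Sset
      simp only [mem_filter, mem_range]
      exact ⟨hlt, hW⟩
    unfold Wp at this
    push_neg at this
    obtain ⟨j, hj, hfalse⟩ := this
    rcases Nat.lt_or_ge j K with hjK | hjK
    · exfalso
      have := Sset_true he (show j + 1 ≤ K by omega)
      rw [show e + (j+1) = e + 1 + j by omega] at this
      rw [this] at hfalse
      simp at hfalse
    · have hjeq : j = K := by omega
      rw [hjeq] at hfalse
      rw [show e + K + 1 = e + 1 + K by omega]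
      simpa using hfalse
  · -- e + 1 = N - (K+1), so e + K + 1 = N - 1
    have : e + K + 1 = N - 1 := by omega
    rw [this]
    exact hlast

lemma Sset_sep {N K l : ℕ} {σ : Fin N → Bool} (h : σ ∈ F0 N K l)
    {e a : ℕ} (he : e ∈ Sset N K σ) (hne : e + 1 ∉ Sset N K σ)
    (ha : a ∈ Sset N K σ) (hlt : e < a) : e + K + 2 ≤ a := by
  by_contra hc
  push_neg at hc
  have hj : e + K + 1 - a ≤ K := by omega
  have := Sset_true ha hj
  rw [show a + (e + K + 1 - a) = e + K + 1 by omega] at this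
  rw [Sset_false h he hne] at this
  simp at this

def runEnds (A : Finset ℕ) : Finset ℕ := A.filter (fun e => e + 1 ∉ A)

def mRuns (A : Finset ℕ) : ℕ := (runEnds A).card

def Gset (K : ℕ) (A : Finset ℕ) : Finset ℕ :=
  A ∪ (runEnds A).biUnion (fun e => Icc (e+1) (e+K+1))

lemma Gset_subset_range {N K l : ℕ} {σ : Fin N → Bool} (h : σ ∈ F0 N K l) :
    ∀ p ∈ Gset K (Sset N K σ), p < N := by
  intro p hp
  unfold Gset at hp
  rcases Finset.mem_union.mp hp with hp | hp
  · have := Sset_subset σ hp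
    simp only [mem_range] at this
    omega
  · obtain ⟨e, he, hpe⟩ := Finset.mem_biUnion.mp hp
    have heA : e ∈ Sset N K σ := (Finset.mem_filter.mp he).1
    have := Sset_subset σ heA
    simp only [mem_range] at this
    simp only [Finset.mem_Icc] at hpe
    omega

lemma Gset_card {N K l : ℕ} {σ : Fin N → Bool} (h : σ ∈ F0 N K l) :
    (Gset K (Sset N K σ)).card = l + mRuns (Sset N K σ) * (K + 1) := by
  set A := Sset N K σ with hA
  have hdisj : Disjoint A ((runEnds A).biUnion (fun e => Icc (e+1) (e+K+1))) := by
    rw [Finset.disjoint_left]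
    intro x hxA hxB
    obtain ⟨e, he, hxe⟩ := Finset.mem_biUnion.mp hxB
    obtain ⟨heA, hne⟩ := Finset.mem_filter.mp he
    simp only [Finset.mem_Icc] at hxe
    have := Sset_sep h heA (by simpa using hne) hxA (by omega)
    omega
  have hpair : ∀ e₁ ∈ runEnds A, ∀ e₂ ∈ runEnds A, e₁ ≠ e₂ →
      Disjoint (Icc (e₁+1) (e₁+K+1)) (Icc (e₂+1) (e₂+K+1)) := by
    have key : ∀ e₁ ∈ runEnds A, ∀ e₂ ∈ runEnds A, e₁ < e₂ →
        Disjoint (Icc (e₁+1) (e₁+K+1)) (Icc (e₂+1) (e₂+K+1)) := by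
      intro e₁ he₁ e₂ he₂ hlt
      obtain ⟨h₁A, h₁n⟩ := Finset.mem_filter.mp he₁
      obtain ⟨h₂A, _⟩ := Finset.mem_filter.mp he₂
      have := Sset_sep h h₁A (by simpa using h₁n) h₂A hlt
      rw [Finset.disjoint_left]
      intro x hx₁ hx₂
      simp only [Finset.mem_Icc] at hx₁ hx₂
      omega
    intro e₁ he₁ e₂ he₂ hne
    rcases Nat.lt_or_ge e₁ e₂ with hlt | hge
    · exact key e₁ he₁ e₂ he₂ hlt
    · exact (key e₂ he₂ e₁ he₁ (by omega)).symm
  unfold Gset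
  rw [Finset.card_union_of_disjoint hdisj, Finset.card_biUnion hpair, Sset_card h]
  congr 1
  rw [show (∑ e ∈ runEnds A, #(Icc (e+1) (e+K+1))) = ∑ _e ∈ runEnds A, (K+1) from
    Finset.sum_congr rfl (fun e _ => by rw [Nat.card_Icc]; omega),
    Finset.sum_const, smul_eq_mul]
  rfl

def vForced (K : ℕ) (A : Finset ℕ) : ℕ → Bool := fun p => decide (∃ s ∈ A, s ≤ p ∧ p ≤ s + K)

lemma forced_val {N K l : ℕ} {σ : Fin N → Bool} (h : σ ∈ F0 N K l) :
    ∀ p ∈ Gset K (Sset N K σ), ext σ p = vForced K (Sset N K σ) p := by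
  intro p hp
  set A := Sset N K σ with hA
  unfold Gset at hp
  rcases Finset.mem_union.mp hp with hpA | hpB
  · have h1 : ext σ p = true := by
      have := Sset_true hpA (Nat.zero_le K)
      simpa using this
    rw [h1]
    symm
    unfold vForced
    simp only [decide_eq_true_eq]
    exact ⟨p, hpA, le_refl _, by omega⟩
  · obtain ⟨e, he, hpe⟩ := Finset.mem_biUnion.mp hpB
    obtain ⟨heA, hen⟩ := Finset.mem_filter.mp he
    have hen' : e + 1 ∉ A := hen
    simp only [Finset.mem_Icc] at hpe
    rcases Nat.lt_or_ge p (e+K+1) with hlt | hge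
    · have h1 : ext σ p = true := by
        have := Sset_true heA (show p - e ≤ K by omega)
        rwa [show e + (p - e) = p by omega] at this
      rw [h1]
      unfold vForced
      symm
      simp only [decide_eq_true_eq]
      exact ⟨e, heA, by omega, by omega⟩
    · have hpeq : p = e + K + 1 := by omega
      rw [hpeq, Sset_false h heA hen']
      unfold vForced
      symm
      simp only [decide_eq_false_iff_not]
      rintro ⟨s, hsA, hs1, hs2⟩
      have hse : e < s := by omega
      have := Sset_sep h heA hen' hsA hse
      omega

lemma fiber_card {N K l : ℕ} (A : Finset ℕ) {σ₀ : Fin N → Bool} (h₀ : σ₀ ∈ F0 N K l)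
    (hA : Sset N K σ₀ = A) :
    ((F0 N K l).filter (fun σ => Sset N K σ = A)).card
      ≤ 2 ^ (N - (l + mRuns A * (K + 1))) := by
  classical
  have hGlt : ∀ p ∈ Gset K A, p < N := by
    rw [← hA]; exact Gset_subset_range h₀
  have hGcard : (Gset K A).card = l + mRuns A * (K + 1) := by
    rw [← hA]
    rw [← hA] at hGlt
    exact Gset_card h₀
  set G' : Finset (Fin N) := (Gset K A).attachFin hGlt with hG'
  have hG'card : G'.card = l + mRuns A * (K + 1) := by
    rw [hG', Finset.card_attachFin, hGcard]
  have htarget : Fintype.card (↥((univ : Finset (Fin N)) \ G') → Bool)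
      = 2 ^ (N - (l + mRuns A * (K + 1))) := by
    rw [Fintype.card_fun, Fintype.card_coe, Finset.card_sdiff_of_subset (Finset.subset_univ _),
      card_univ, Fintype.card_fin, Fintype.card_bool, hG'card]
  calc ((F0 N K l).filter (fun σ => Sset N K σ = A)).card
      ≤ (Finset.univ : Finset (↥((univ : Finset (Fin N)) \ G') → Bool)).card := by
        apply Finset.card_le_card_of_injOn
          (fun σ => (fun p : ↥((univ : Finset (Fin N)) \ G') => σ ↑p))
        · intro σ _
          exact Finset.mem_univ _
        · intro σ₁ hσ₁ σ₂ hσ₂ hfeq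
          simp only [coe_filter, Set.mem_setOf_eq] at hσ₁ hσ₂
          funext k
          by_cases hk : k ∈ G'
          · have hkG : (↑k : ℕ) ∈ Gset K A := by
              rw [hG'] at hk
              exact (Finset.mem_attachFin hGlt).mp hk
            have e₁ : ext σ₁ ↑k = vForced K A ↑k := by
              have := forced_val hσ₁.1 ↑k (by rw [hσ₁.2]; exact hkG)
              rwa [hσ₁.2] at this
            have e₂ : ext σ₂ ↑k = vForced K A ↑k := by
              have := forced_val hσ₂.1 ↑k (by rw [hσ₂.2]; exact hkG)
              rwa [hσ₂.2] at this
            have g₁ : σ₁ k = ext σ₁ ↑k := by rw [ext_lt σ₁ k.isLt]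
            have g₂ : σ₂ k = ext σ₂ ↑k := by rw [ext_lt σ₂ k.isLt]
            rw [g₁, g₂, e₁, e₂]
          · have hmem : k ∈ (univ : Finset (Fin N)) \ G' := by
              simp [hk]
            exact congrFun hfeq ⟨k, hmem⟩
    _ = 2 ^ (N - (l + mRuns A * (K + 1))) := by
        rw [Finset.card_univ, htarget]

lemma sort_len (A : Finset ℕ) : (A.sort (· ≤ ·)).length = A.card := Finset.length_sort _

lemma sort_strictMono (A : Finset ℕ) {i j : ℕ} (hij : i < j) (hj : j < A.card) :
    (A.sort (· ≤ ·)).getD i 0 < (A.sort (· ≤ ·)).getD j 0 := by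
  have hj' : j < (A.sort (· ≤ ·)).length := by rw [sort_len]; exact hj
  have hi' : i < (A.sort (· ≤ ·)).length := lt_trans (by omega) hj'
  rw [List.getD_eq_getElem _ _ hi', List.getD_eq_getElem _ _ hj']
  exact List.SortedLT.strictMono_get (Finset.sortedLT_sort A) (show (⟨i,hi'⟩ : Fin _) < ⟨j,hj'⟩ from hij)

lemma sort_getD_mem (A : Finset ℕ) {i : ℕ} (hi : i < A.card) :
    (A.sort (· ≤ ·)).getD i 0 ∈ A := by
  have hi' : i < (A.sort (· ≤ ·)).length := by rw [sort_len]; exact hi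
  rw [List.getD_eq_getElem _ _ hi']
  exact (Finset.mem_sort _).mp (List.getElem_mem hi')

lemma exists_sort_idx (A : Finset ℕ) {a : ℕ} (ha : a ∈ A) :
    ∃ i, i < A.card ∧ (A.sort (· ≤ ·)).getD i 0 = a := by
  have : a ∈ A.sort (· ≤ ·) := (Finset.mem_sort _).mpr ha
  obtain ⟨⟨i, hi⟩, hja⟩ := List.mem_iff_get.mp this
  refine ⟨i, by rw [← sort_len]; exact hi, ?_⟩
  rw [List.getD_eq_getElem _ _ hi]; exact hja

lemma sort_getD_zero (A : Finset ℕ) (h0 : 0 ∈ A) : (A.sort (· ≤ ·)).getD 0 0 = 0 := by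
  obtain ⟨i, hi, hgi⟩ := exists_sort_idx A h0
  rcases Nat.eq_zero_or_pos i with h | h
  · rwa [h] at hgi
  · have := sort_strictMono A h hi
    omega

def gapIdx0 (A : Finset ℕ) : Finset ℕ :=
  (range A.card).filter (fun i => i + 1 < A.card ∧
    (A.sort (· ≤ ·)).getD (i+1) 0 ≠ (A.sort (· ≤ ·)).getD i 0 + 1)

def encA (A : Finset ℕ) : Finset (ℕ × ℕ) :=
  (gapIdx0 A).image (fun i => (i + 1, (A.sort (· ≤ ·)).getD (i+1) 0))

lemma encA_card (A : Finset ℕ) : (encA A).card = (gapIdx0 A).card := by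
  apply Finset.card_image_of_injOn
  intro i _ j _ hij
  simpa using congrArg Prod.fst hij

lemma mRuns_eq_gap (A : Finset ℕ) (hA : A.Nonempty) :
    mRuns A = (gapIdx0 A).card + 1 := by
  have hcard : 0 < A.card := Finset.card_pos.mpr hA
  have hnotmem : A.card - 1 ∉ gapIdx0 A := by
    unfold gapIdx0
    simp only [mem_filter, mem_range]
    omega
  have hins : (gapIdx0 A).card + 1 = (insert (A.card - 1) (gapIdx0 A)).card := by
    rw [Finset.card_insert_of_notMem hnotmem]
  rw [hins]
  unfold mRuns
  symm
  apply Finset.card_bij (fun i _ => (A.sort (· ≤ ·)).getD i 0)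
  · -- maps into runEnds
    intro i hi
    have hiR : i < A.card := by
      rcases Finset.mem_insert.mp hi with h | h
      · omega
      · have := (Finset.mem_filter.mp h).1; simpa using this
    unfold runEnds
    rw [Finset.mem_filter]
    refine ⟨sort_getD_mem A hiR, ?_⟩
    intro hmem
    obtain ⟨j, hj, hgj⟩ := exists_sort_idx A hmem
    have hij : i < j := by
      by_contra hle
      push_neg at hle
      rcases Nat.lt_or_ge j i with h | h
      · have := sort_strictMono A h hiR; omega
      · have : j = i := by omega
        subst this
        omega
    have hi1 : i + 1 < A.card := by omega
    have h1 : (A.sort (· ≤ ·)).getD (i+1) 0 = (A.sort (· ≤ ·)).getD i 0 + 1 := by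
      rcases Nat.eq_or_lt_of_le (show i + 1 ≤ j by omega) with h | h
      · rw [h, hgj]
      · have g1 := sort_strictMono A h hj
        have g2 := sort_strictMono A (show i < i + 1 by omega) hi1
        omega
    rcases Finset.mem_insert.mp hi with h | h
    · omega
    · have := (Finset.mem_filter.mp h).2
      exact this.2 h1
  · -- injective
    intro i hi j hj heq
    have hiR : i < A.card := by
      rcases Finset.mem_insert.mp hi with h | h
      · omega
      · have := (Finset.mem_filter.mp h).1; simpa using this
    have hjR : j < A.card := by
      rcases Finset.mem_insert.mp hj with h | h
      · omega
      · have := (Finset.mem_filter.mp h).1; simpa using this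
    rcases Nat.lt_or_ge i j with h | h
    · have := sort_strictMono A h hjR; omega
    · rcases Nat.lt_or_ge j i with h' | h'
      · have := sort_strictMono A h' hiR; omega
      · omega
  · -- surjective
    intro e he
    obtain ⟨heA, hen⟩ := Finset.mem_filter.mp he
    obtain ⟨i, hi, hgi⟩ := exists_sort_idx A heA
    refine ⟨i, ?_, hgi⟩
    rcases Nat.lt_or_ge (i+1) A.card with h | h
    · apply Finset.mem_insert.mpr
      right
      unfold gapIdx0
      rw [Finset.mem_filter, Finset.mem_range]
      refine ⟨by omega, h, ?_⟩
      intro hc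
      apply hen
      rw [hgi] at hc
      rw [← hc]
      exact sort_getD_mem A h
    · have : i = A.card - 1 := by omega
      rw [this]
      exact Finset.mem_insert_self _ _

lemma encA_inj {A B : Finset ℕ} (hcard : A.card = B.card) (hA0 : 0 ∈ A) (hB0 : 0 ∈ B)
    (henc : encA A = encA B) : A = B := by
  have hstep : ∀ i, i < A.card → (A.sort (· ≤ ·)).getD i 0 = (B.sort (· ≤ ·)).getD i 0 := by
    intro i
    induction i with
    | zero =>
      intro _
      rw [sort_getD_zero A hA0, sort_getD_zero B hB0]
    | succ i ih =>
      intro hi1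
      have hiA : i < A.card := by omega
      have hIH := ih hiA
      by_cases hgap : i ∈ gapIdx0 A
      · have hmem : (i + 1, (A.sort (· ≤ ·)).getD (i+1) 0) ∈ encA A := by
          unfold encA
          exact Finset.mem_image.mpr ⟨i, hgap, rfl⟩
        rw [henc] at hmem
        unfold encA at hmem
        obtain ⟨j, hj, hje⟩ := Finset.mem_image.mp hmem
        have hji : j = i := by
          have := congrArg Prod.fst hje
          simpa using this
        subst hji
        have := congrArg Prod.snd hje
        simpa using this.symm
      · have hnogapA : (A.sort (· ≤ ·)).getD (i+1) 0 = (A.sort (· ≤ ·)).getD i 0 + 1 := by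
          by_contra hc
          apply hgap
          unfold gapIdx0
          rw [Finset.mem_filter, Finset.mem_range]
          exact ⟨by omega, hi1, hc⟩
        have hgapB : i ∉ gapIdx0 B := by
          intro hgB
          apply hgap
          have hmem : (i + 1, (B.sort (· ≤ ·)).getD (i+1) 0) ∈ encA A := by
            rw [henc]
            unfold encA
            exact Finset.mem_image.mpr ⟨i, hgB, rfl⟩
          unfold encA at hmem
          obtain ⟨j, hj, hje⟩ := Finset.mem_image.mp hmem
          have hji : j = i := by
            have := congrArg Prod.fst hje
            simpa using this
          subst hji
          exact hj
        have hnogapB : (B.sort (· ≤ ·)).getD (i+1) 0 = (B.sort (· ≤ ·)).getD i 0 + 1 := by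
          by_contra hc
          apply hgapB
          unfold gapIdx0
          rw [Finset.mem_filter, Finset.mem_range]
          refine ⟨by omega, by omega, hc⟩
        rw [hnogapA, hnogapB, hIH]
  have hlist : A.sort (· ≤ ·) = B.sort (· ≤ ·) := by
    apply List.ext_get
    · rw [sort_len, sort_len, hcard]
    · intro n h₁ h₂
      have hn : n < A.card := by rw [← sort_len]; exact h₁
      have := hstep n hn
      rwa [List.getD_eq_getElem _ _ h₁, List.getD_eq_getElem _ _ h₂] at this
  have := congrArg List.toFinset hlist
  rwa [Finset.sort_toFinset, Finset.sort_toFinset] at this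

lemma mRuns_pos (A : Finset ℕ) (hA : A.Nonempty) : 1 ≤ mRuns A := by
  unfold mRuns
  rw [Nat.one_le_iff_ne_zero, ← Nat.pos_iff_ne_zero, Finset.card_pos]
  refine ⟨A.max' hA, Finset.mem_filter.mpr ⟨A.max'_mem hA, fun hc => ?_⟩⟩
  have := A.le_max' _ hc
  omega

lemma mRuns_le_card (A : Finset ℕ) : mRuns A ≤ A.card :=
  Finset.card_le_card (Finset.filter_subset _ _)

lemma count_A {N K l m : ℕ} (hNK2 : K + 2 ≤ N) (hl1 : 1 ≤ l) :
    ((((F0 N K l).image (Sset N K)).filter (fun A => mRuns A = m)).card)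
      ≤ (l * N) ^ (m - 1) := by
  classical
  have := Finset.card_le_card_of_injOn (f := encA)
    (s := ((F0 N K l).image (Sset N K)).filter (fun A => mRuns A = m))
    (t := (Finset.range l ×ˢ Finset.range N).powersetCard (m - 1)) ?_ ?_
  · refine this.trans ?_
    rw [Finset.card_powersetCard, Finset.card_product, Finset.card_range, Finset.card_range]
    exact Nat.choose_le_pow _ _
  · -- maps to
    intro A hA
    obtain ⟨hAim, hAm⟩ := Finset.mem_filter.mp hA
    obtain ⟨σ, hσ, hσA⟩ := Finset.mem_image.mp hAim
    have hcard : A.card = l := by rw [← hσA]; exact Sset_card hσ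
    have hne : A.Nonempty := Finset.card_pos.mp (by omega)
    rw [Finset.mem_coe, Finset.mem_powersetCard]
    constructor
    · intro p hp
      unfold encA at hp
      obtain ⟨i, hi, hip⟩ := Finset.mem_image.mp hp
      have hmf := Finset.mem_filter.mp hi
      have hi1 : i + 1 < A.card := hmf.2.1
      have hv : (A.sort (· ≤ ·)).getD (i+1) 0 ∈ A := sort_getD_mem A hi1
      have hvN : (A.sort (· ≤ ·)).getD (i+1) 0 < N := by
        have hv2 : (A.sort (· ≤ ·)).getD (i+1) 0 ∈ Sset N K σ := by rw [hσA]; exact hv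
        have := Sset_subset σ hv2
        simp only [mem_range] at this
        omega
      rw [← hip]
      rw [Finset.mem_product]
      constructor
      · simp only [Finset.mem_range]; omega
      · simp only [Finset.mem_range]; exact hvN
    · rw [encA_card, ← hAm, mRuns_eq_gap A hne]
      omega
  · -- injective
    intro A hA B hB henc
    simp only [coe_filter, Set.mem_setOf_eq] at hA hB
    obtain ⟨σA, hσA, hσAe⟩ := Finset.mem_image.mp hA.1
    obtain ⟨σB, hσB, hσBe⟩ := Finset.mem_image.mp hB.1
    have hcA : A.card = l := by rw [← hσAe]; exact Sset_card hσA
    have hcB : B.card = l := by rw [← hσBe]; exact Sset_card hσB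
    have h0A : 0 ∈ A := by rw [← hσAe]; exact Sset_zero_mem hσA hNK2
    have h0B : 0 ∈ B := by rw [← hσBe]; exact Sset_zero_mem hσB hNK2
    exact encA_inj (by omega) h0A h0B henc

lemma geom_le_two (x : ℝ) (h0 : 0 ≤ x) (h : x ≤ 1/2) (n : ℕ) :
    ∑ i ∈ range n, x ^ i ≤ 2 := by
  induction n with
  | zero => norm_num
  | succ n ih =>
    rw [geom_sum_succ]
    have hs : (0:ℝ) ≤ ∑ i ∈ range n, x^i := Finset.sum_nonneg (fun i _ => pow_nonneg h0 i)
    nlinarith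

lemma part2 {N K l : ℕ} (hNK2 : K + 2 ≤ N) (hl1 : 1 ≤ l)
    (hx : (l : ℝ) * (N : ℝ) * ((2:ℝ)^(K+1))⁻¹ ≤ 1/2) :
    ((F0 N K l).card : ℝ) ≤ 2^N * ((2:ℝ)^l)⁻¹ * ((2:ℝ)^K)⁻¹ := by
  classical
  set 𝒜 := (F0 N K l).image (Sset N K) with h𝒜
  have hcardsum : (F0 N K l).card
      = ∑ A ∈ 𝒜, ((F0 N K l).filter (fun σ => Sset N K σ = A)).card :=
    Finset.card_eq_sum_card_fiberwise (fun σ hσ => Finset.mem_image_of_mem _ hσ)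
  have htwo : (2:ℝ) ^ (K+1) ≠ 0 := by positivity
  have hA_bound : ∀ A ∈ 𝒜, (((F0 N K l).filter (fun σ => Sset N K σ = A)).card : ℝ)
      ≤ (2:ℝ)^N * ((2:ℝ)^l)⁻¹ * (((2:ℝ)^(K+1))^(mRuns A))⁻¹ := by
    intro A hA
    obtain ⟨σ₀, h₀, hA₀⟩ := Finset.mem_image.mp hA
    have hGc := Gset_card h₀
    rw [hA₀] at hGc
    have hGsub : Gset K A ⊆ range N := by
      intro p hp
      rw [Finset.mem_range]
      have := Gset_subset_range h₀
      rw [hA₀] at this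
      exact this p hp
    have hd : l + mRuns A * (K+1) ≤ N := by
      have := Finset.card_le_card hGsub
      rw [hGc, Finset.card_range] at this
      exact this
    have hfib := fiber_card A h₀ hA₀
    have hcast : (((F0 N K l).filter (fun σ => Sset N K σ = A)).card : ℝ)
        ≤ ((2:ℝ))^(N - (l + mRuns A * (K+1))) := by
      calc (((F0 N K l).filter (fun σ => Sset N K σ = A)).card : ℝ)
          ≤ ((2 ^ (N - (l + mRuns A * (K+1))) : ℕ) : ℝ) := by exact_mod_cast hfib
        _ = ((2:ℝ))^(N - (l + mRuns A * (K+1))) := by push_cast; ring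
    refine hcast.trans (le_of_eq ?_)
    rw [pow_sub₀ (2:ℝ) (by norm_num) hd, pow_add, mul_comm (mRuns A) (K+1), pow_mul]
    rw [mul_inv]
    ring
  have hmaps : ∀ A ∈ 𝒜, mRuns A ∈ Icc 1 l := by
    intro A hA
    obtain ⟨σ₀, h₀, hA₀⟩ := Finset.mem_image.mp hA
    have hcard : A.card = l := by rw [← hA₀]; exact Sset_card h₀
    have hne : A.Nonempty := Finset.card_pos.mp (by omega)
    rw [Finset.mem_Icc]
    exact ⟨mRuns_pos A hne, hcard ▸ mRuns_le_card A⟩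
  have hsplit : ∑ A ∈ 𝒜, ((2:ℝ)^N * ((2:ℝ)^l)⁻¹ * (((2:ℝ)^(K+1))^(mRuns A))⁻¹)
      = ∑ m₀ ∈ Icc 1 l, ∑ A ∈ 𝒜.filter (fun A => mRuns A = m₀),
          ((2:ℝ)^N * ((2:ℝ)^l)⁻¹ * (((2:ℝ)^(K+1))^(mRuns A))⁻¹) :=
    (Finset.sum_fiberwise_of_maps_to hmaps _).symm
  have hinner : ∀ m₀ ∈ Icc 1 l,
      (∑ A ∈ 𝒜.filter (fun A => mRuns A = m₀),
        ((2:ℝ)^N * ((2:ℝ)^l)⁻¹ * (((2:ℝ)^(K+1))^(mRuns A))⁻¹))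
      ≤ ((l*N : ℕ) : ℝ)^(m₀ - 1) * ((2:ℝ)^N * ((2:ℝ)^l)⁻¹ * (((2:ℝ)^(K+1))^m₀)⁻¹) := by
    intro m₀ hm₀
    have hterm : ∀ A ∈ 𝒜.filter (fun A => mRuns A = m₀),
        ((2:ℝ)^N * ((2:ℝ)^l)⁻¹ * (((2:ℝ)^(K+1))^(mRuns A))⁻¹)
        = ((2:ℝ)^N * ((2:ℝ)^l)⁻¹ * (((2:ℝ)^(K+1))^m₀)⁻¹) := by
      intro A hA
      rw [(Finset.mem_filter.mp hA).2]
    rw [Finset.sum_congr rfl hterm, Finset.sum_const, nsmul_eq_mul]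
    apply mul_le_mul_of_nonneg_right
    · have := count_A (N := N) (K := K) (l := l) (m := m₀) hNK2 hl1
      calc ((𝒜.filter (fun A => mRuns A = m₀)).card : ℝ)
          ≤ (((l*N)^(m₀-1) : ℕ) : ℝ) := by exact_mod_cast this
        _ = ((l*N : ℕ) : ℝ)^(m₀-1) := by push_cast; ring
    · positivity
  calc ((F0 N K l).card : ℝ)
      = ∑ A ∈ 𝒜, (((F0 N K l).filter (fun σ => Sset N K σ = A)).card : ℝ) := by
        rw [hcardsum]; push_cast; rfl
    _ ≤ ∑ A ∈ 𝒜, ((2:ℝ)^N * ((2:ℝ)^l)⁻¹ * (((2:ℝ)^(K+1))^(mRuns A))⁻¹) :=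
        Finset.sum_le_sum hA_bound
    _ = ∑ m₀ ∈ Icc 1 l, ∑ A ∈ 𝒜.filter (fun A => mRuns A = m₀),
          ((2:ℝ)^N * ((2:ℝ)^l)⁻¹ * (((2:ℝ)^(K+1))^(mRuns A))⁻¹) := hsplit
    _ ≤ ∑ m₀ ∈ Icc 1 l, ((l*N : ℕ) : ℝ)^(m₀ - 1) * ((2:ℝ)^N * ((2:ℝ)^l)⁻¹ * (((2:ℝ)^(K+1))^m₀)⁻¹) :=
        Finset.sum_le_sum hinner
    _ = (2:ℝ)^N * ((2:ℝ)^l)⁻¹ * ((2:ℝ)^(K+1))⁻¹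
          * ∑ j ∈ range l, ((l : ℝ) * (N:ℝ) * ((2:ℝ)^(K+1))⁻¹)^j := by
        rw [← Finset.Ico_add_one_right_eq_Icc, Finset.sum_Ico_eq_sum_range, Finset.mul_sum]
        apply Finset.sum_congr (by rw [show l + 1 - 1 = l from rfl])
        intro j hj
        rw [show 1 + j - 1 = j by omega, pow_succ, mul_inv, mul_pow, mul_inv]
        push_cast
        simp only [mul_pow, inv_pow, pow_add, pow_one, mul_inv]
        ring
    _ ≤ (2:ℝ)^N * ((2:ℝ)^l)⁻¹ * ((2:ℝ)^(K+1))⁻¹ * 2 := by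
        apply mul_le_mul_of_nonneg_left
        · exact geom_le_two _ (by positivity) hx l
        · positivity
    _ = 2^N * ((2:ℝ)^l)⁻¹ * ((2:ℝ)^K)⁻¹ := by
        rw [pow_succ]
        field_simp


theorem stmt_1 (N K l : ℕ) (hK : 1 ≤ K) (hNK : K < N)
    (hbig : (N : ℝ) ^ 2 * 2 ^ (-(K : ℝ)) ≤ 1 / 2)
    (hl1 : 1 ≤ l) (hl2 : l ≤ N - K - 1) :
    (Finset.univ.filter fun σ : Fin N → Bool =>
        matchCount N K (ext σ) (fun _ => true) = l).card
      ≤ N * 2 ^ (N - (K + l)) := by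
  classical
  have hNK2 : K + 2 ≤ N := by omega
  have hN : 0 < N := by omega
  have hlN : l < N := by omega
  have hbig' : (N:ℝ)^2 * ((2:ℝ)^(K:ℕ))⁻¹ ≤ 1/2 := by
    rwa [show ((2:ℝ) ^ (-(K:ℝ))) = ((2:ℝ)^(K:ℕ))⁻¹ by
      rw [Real.rpow_neg (by norm_num : (0:ℝ) ≤ 2), Real.rpow_natCast]] at hbig
  have hx : (l : ℝ) * (N : ℝ) * ((2:ℝ)^(K+1))⁻¹ ≤ 1/2 := by
    have hlle : (l:ℝ) ≤ (N:ℝ) := by exact_mod_cast (le_of_lt hlN)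
    have hNpos : (0:ℝ) ≤ (N:ℝ) := by positivity
    have h1 : (l:ℝ) * N ≤ (N:ℝ)^2 := by nlinarith
    have h2 : (l:ℝ)*N*((2:ℝ)^K)⁻¹ ≤ 1/2 :=
      le_trans (mul_le_mul_of_nonneg_right h1 (by positivity)) hbig'
    have heq : (l:ℝ)*N*((2:ℝ)^(K+1))⁻¹ = ((l:ℝ)*N*((2:ℝ)^K)⁻¹) / 2 := by
      rw [pow_succ]
      field_simp
    rw [heq]
    linarith
  have hp1 := part1 (N := N) (K := K) (l := l) hN hl1 hlN
  have hp2 := part2 (N := N) (K := K) (l := l) hNK2 hl1 hx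
  have hKlN : K + l ≤ N := by omega
  have hF0 : (F0 N K l).card ≤ 2 ^ (N - (K+l)) := by
    have hrhs : (((2:ℕ)^(N-(K+l)) : ℕ) : ℝ) = (2:ℝ)^N * ((2:ℝ)^l)⁻¹ * ((2:ℝ)^K)⁻¹ := by
      push_cast
      rw [pow_sub₀ (2:ℝ) (by norm_num) hKlN, pow_add, mul_inv]
      ring
    have h3 := hp2
    rw [← hrhs] at h3
    exact_mod_cast h3
  exact hp1.trans (Nat.mul_le_mul_left _ hF0)
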